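/- arXiv:2406.09851 — 2 statements merged into one kernel-verified Lean document; each statement's English description precedes it below -/
import Mathlib

section
/- Let m, n ≥ 1 and let A be the m×n real matrix whose only possibly nonzero entries are in its first row and first column, with zero (1,1)-entry: A_{1,j} = a_{j−1} for 2 ≤ j ≤ n, A_{i,1} = b_{i−1} for 2 ≤ i ≤ m, A_{1,1} = 0, and A_{i,j} = 0 for i, j ≥ 2. Then ‖A‖ = ( max( Σ_{j=1}^{n−1} a_j² , Σ_{i=1}^{m−1} b_i² ) )^{1/2}, where ‖·‖ is the ℓ²→ℓ² operator norm. -/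
open MeasureTheory ProbabilityTheory Filter

/-- The ℓ²→ℓ² operator norm (largest singular value) of a real matrix. -/
noncomputable def l2OpNorm {m n : Type*} [Fintype m] [Fintype n] [DecidableEq n]
    (A : Matrix m n ℝ) : ℝ :=
  ‖LinearMap.toContinuousLinearMap (Matrix.toEuclideanLin A)‖

/-- The operator norm of the adjacency matrix of a weighted directed star. -/
theorem stmt_10 (m n : ℕ) (a : Fin n → ℝ) (b : Fin m → ℝ)
    (A : Matrix (Fin (m + 1)) (Fin (n + 1)) ℝ)
    (h00 : A 0 0 = 0)
    (hrow : ∀ j : Fin n, A 0 j.succ = a j)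
    (hcol : ∀ i : Fin m, A i.succ 0 = b i)
    (hzero : ∀ (i : Fin m) (j : Fin n), A i.succ j.succ = 0) :
    l2OpNorm A = Real.sqrt (max (∑ j, a j ^ 2) (∑ i, b i ^ 2)) := by
  classical
  set S := ∑ j, a j ^ 2 with hS
  set T := ∑ i, b i ^ 2 with hT
  have hS0 : 0 ≤ S := Finset.sum_nonneg fun _ _ => sq_nonneg _
  have hT0 : 0 ≤ T := Finset.sum_nonneg fun _ _ => sq_nonneg _
  set f := LinearMap.toContinuousLinearMap (Matrix.toEuclideanLin A) with hf
  -- formula for the action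
  have hfapp : ∀ (v : EuclideanSpace ℝ (Fin (n+1))) (i : Fin (m+1)),
      f v i = ∑ j, A i j * v j := by
    intro v i
    rfl
  -- mulVec at row 0 and rows i.succ
  have hrow0 : ∀ (v : EuclideanSpace ℝ (Fin (n+1))),
      f v 0 = ∑ j : Fin n, a j * v j.succ := by
    intro v
    rw [hfapp, Fin.sum_univ_succ, h00, zero_mul, zero_add]
    exact Finset.sum_congr rfl fun j _ => by rw [hrow]
  have hrowi : ∀ (v : EuclideanSpace ℝ (Fin (n+1))) (i : Fin m),
      f v i.succ = b i * v 0 := by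
    intro v i
    rw [hfapp, Fin.sum_univ_succ, hcol]
    simp [hzero]
  -- norm squared of f v
  have hnormsq : ∀ (v : EuclideanSpace ℝ (Fin (n+1))),
      ‖f v‖ ^ 2 = (∑ j : Fin n, a j * v j.succ) ^ 2 + T * (v 0) ^ 2 := by
    intro v
    rw [EuclideanSpace.norm_eq, Real.sq_sqrt (Finset.sum_nonneg fun _ _ => sq_nonneg _)]
    rw [Fin.sum_univ_succ, hrow0]
    congr 1
    · simp [Real.norm_eq_abs, sq_abs]
    · rw [hT, Finset.sum_mul]
      refine Finset.sum_congr rfl fun i _ => ?_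
      rw [hrowi]
      simp [Real.norm_eq_abs, sq_abs, mul_pow]
  have hnormv : ∀ (v : EuclideanSpace ℝ (Fin (n+1))),
      ‖v‖ ^ 2 = (v 0) ^ 2 + ∑ j : Fin n, (v j.succ) ^ 2 := by
    intro v
    rw [EuclideanSpace.norm_eq, Real.sq_sqrt (Finset.sum_nonneg fun _ _ => sq_nonneg _),
      Fin.sum_univ_succ]
    simp [Real.norm_eq_abs, sq_abs]
  have hM0 : 0 ≤ max S T := le_trans hS0 (le_max_left S T)
  have hfnorm : l2OpNorm A = ‖f‖ := rfl
  rw [hfnorm]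
  apply le_antisymm
  · -- upper bound
    apply ContinuousLinearMap.opNorm_le_bound _ (Real.sqrt_nonneg _)
    intro v
    have h1 : ‖f v‖ ^ 2 ≤ max S T * ‖v‖ ^ 2 := by
      rw [hnormsq v, hnormv v]
      have cs : (∑ j : Fin n, a j * v j.succ) ^ 2 ≤ S * ∑ j : Fin n, (v j.succ) ^ 2 := by
        rw [hS]
        exact Finset.sum_mul_sq_le_sq_mul_sq Finset.univ a (fun j => v j.succ)
      have hsumnn : 0 ≤ ∑ j : Fin n, (v j.succ) ^ 2 :=
        Finset.sum_nonneg fun j _ => sq_nonneg _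
      nlinarith [le_max_left S T, le_max_right S T, sq_nonneg (v 0)]
    have h2 := Real.sqrt_le_sqrt h1
    rwa [Real.sqrt_sq (norm_nonneg _), Real.sqrt_mul hM0, Real.sqrt_sq (norm_nonneg v)] at h2
  · -- lower bound
    have hbT : Real.sqrt T ≤ ‖f‖ := by
      set v : EuclideanSpace ℝ (Fin (n+1)) := EuclideanSpace.single (0 : Fin (n+1)) (1:ℝ) with hv
      have hv0 : v 0 = 1 := by simp [hv]
      have hvs : ∀ j : Fin n, v j.succ = 0 := by
        intro j
        simp [hv, EuclideanSpace.single_apply, (Fin.succ_ne_zero j)]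
      have hvn : ‖v‖ = 1 := by
        rw [hv, EuclideanSpace.norm_single]; norm_num
      have h3 : ‖f v‖ ^ 2 = T := by
        rw [hnormsq v, hv0]
        simp [hvs]
      have h4 : ‖f v‖ = Real.sqrt T := by
        rw [← h3, Real.sqrt_sq (norm_nonneg _)]
      have := f.le_opNorm v
      rwa [h4, hvn, mul_one] at this
    have hbS : Real.sqrt S ≤ ‖f‖ := by
      rcases eq_or_lt_of_le hS0 with h | hSpos
      · rw [← h, Real.sqrt_zero]; exact norm_nonneg f
      · set v : EuclideanSpace ℝ (Fin (n+1)) :=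
          (WithLp.equiv 2 (Fin (n+1) → ℝ)).symm (Fin.cons 0 (fun j => a j)) with hv
        have hv0 : v 0 = 0 := rfl
        have hvs : ∀ j : Fin n, v j.succ = a j := by
          intro j; simp [hv]
        have hvn : ‖v‖ = Real.sqrt S := by
          rw [EuclideanSpace.norm_eq]
          congr 1
          rw [Fin.sum_univ_succ, hv0, hS]
          simp [hvs, Real.norm_eq_abs, sq_abs]
        have h3 : ‖f v‖ = S := by
          have hsum : (∑ j : Fin n, a j * v j.succ) = S := by
            rw [hS]
            exact Finset.sum_congr rfl fun j _ => by rw [hvs]; ring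
          have : ‖f v‖ ^ 2 = S ^ 2 := by
            rw [hnormsq v, hv0, hsum]; ring
          have := congrArg Real.sqrt this
          rwa [Real.sqrt_sq (norm_nonneg _), Real.sqrt_sq hS0] at this
        have h5 := f.le_opNorm v
        rw [h3, hvn] at h5
        have hsq : Real.sqrt S > 0 := Real.sqrt_pos.2 hSpos
        have : Real.sqrt S * Real.sqrt S ≤ ‖f‖ * Real.sqrt S := by
          rwa [Real.mul_self_sqrt hS0]
        exact le_of_mul_le_mul_right this hsq
    rcases max_cases S T with ⟨h, _⟩ | ⟨h, _⟩ <;> rw [h]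
    · exact hbS
    · exact hbT
end

section
/- Fix constants a, d, δ > 0. For each n ≥ 3 let B_n be a random variable with the binomial distribution with ⌈a·log n/log log n⌉ trials and success probability d/n (assuming n > d). Then limsup_{n→∞} log ℙ(B_n ≥ δ) / log n ≤ −δ. -/
open MeasureTheory ProbabilityTheory Filter

private lemma aux_log_div_log : Tendsto (fun n : ℕ =>
    Real.log (Real.log n) / Real.log n) atTop (nhds 0) :=
  Real.isLittleO_log_id_atTop.tendsto_div_nhds_zero.comp
    (Real.tendsto_log_atTop.comp tendsto_natCast_atTop_atTop)

private lemma aux_log_div_self : Tendsto (fun n : ℕ =>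
    Real.log n / n) atTop (nhds 0) :=
  Real.isLittleO_log_id_atTop.tendsto_div_nhds_zero.comp tendsto_natCast_atTop_atTop

private lemma aux_self_div_log : Tendsto (fun x : ℝ => x / Real.log x) atTop atTop := by
  have h0 : Tendsto (fun x : ℝ => Real.log x / x) atTop (nhdsWithin 0 (Set.Ioi 0)) := by
    refine tendsto_nhdsWithin_iff.mpr ⟨Real.isLittleO_log_id_atTop.tendsto_div_nhds_zero, ?_⟩
    filter_upwards [eventually_gt_atTop (1 : ℝ)] with x hx
    exact div_pos (Real.log_pos hx) (lt_trans one_pos hx)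
  have h1 := h0.inv_tendsto_nhdsGT_zero
  refine h1.congr fun x => ?_
  simp [inv_div]

set_option maxHeartbeats 1000000 in
/-- Upper tail estimate for a binomial random variable with
`⌈a·log n/log log n⌉` trials and success probability `d/n`. -/
theorem stmt_15 (a d δ : ℝ) (ha : 0 < a) (hd : 0 < d) (hδ : 0 < δ)
    {Ω : Type*} [MeasurableSpace Ω] (μ : Measure Ω) [IsProbabilityMeasure μ]
    (B : ℕ → Ω → ℕ)
    (hB : ∀ n : ℕ, 3 ≤ n → d < n → ∀ k : ℕ,
      (μ {ω | B n ω = k}).toReal =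
        (Nat.choose ⌈a * Real.log n / Real.log (Real.log n)⌉₊ k : ℝ) * (d / n) ^ k *
          (1 - d / n) ^ (⌈a * Real.log n / Real.log (Real.log n)⌉₊ - k)) :
    Filter.limsup (fun n : ℕ =>
        Real.log ((μ {ω | δ ≤ (B n ω : ℝ)}).toReal) / Real.log n) atTop ≤ -δ := by
  set k : ℕ := ⌈δ⌉₊ with hkdef
  have hk1 : 1 ≤ k := Nat.one_le_ceil_iff.mpr hδ
  have hδk : δ ≤ (k : ℝ) := Nat.le_ceil δ
  set f : ℕ → ℝ := fun n =>
    Real.log ((μ {ω | δ ≤ (B n ω : ℝ)}).toReal) / Real.log n with hfdef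
  set g : ℕ → ℝ := fun n =>
    (Real.log 2 + (k : ℝ) * Real.log ((a + 1) * d)) / Real.log n
      + (k : ℝ) * (Real.log (Real.log n) / Real.log n) - (k : ℝ) with hgdef
  set c0 : ℝ := -|(k : ℝ) * Real.log d - Real.log 2| - (k : ℝ) with hc0def
  have hlog : Tendsto (fun n : ℕ => Real.log n) atTop atTop :=
    Real.tendsto_log_atTop.comp tendsto_natCast_atTop_atTop
  -- tendsto of g
  have hgt : Tendsto g atTop (nhds (-(k : ℝ))) := by
    have t1 : Tendsto (fun n : ℕ =>
        (Real.log 2 + (k : ℝ) * Real.log ((a + 1) * d)) / Real.log n) atTop (nhds 0) :=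
      tendsto_const_nhds.div_atTop hlog
    have t2 := aux_log_div_log.const_mul (k : ℝ)
    have := (t1.add t2).sub_const (k : ℝ)
    have h0 : (0 : ℝ) + (k : ℝ) * 0 - (k : ℝ) = -(k : ℝ) := by ring
    rwa [h0] at this
  -- eventual facts
  have e1 : ∀ᶠ n : ℕ in atTop, 3 ≤ n := eventually_ge_atTop 3
  have e2 : ∀ᶠ n : ℕ in atTop, d < (n : ℝ) :=
    tendsto_natCast_atTop_atTop.eventually_gt_atTop d
  have e3 : ∀ᶠ n : ℕ in atTop, 1 ≤ Real.log n := hlog.eventually_ge_atTop 1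
  have e4 : ∀ᶠ n : ℕ in atTop, 1 ≤ Real.log (Real.log n) :=
    (Real.tendsto_log_atTop.comp hlog).eventually_ge_atTop 1
  have e5 : ∀ᶠ n : ℕ in atTop, (k : ℝ) ≤ a * Real.log n / Real.log (Real.log n) := by
    have hx : Tendsto (fun n : ℕ => a * Real.log n / Real.log (Real.log n)) atTop atTop := by
      have := (aux_self_div_log.comp hlog).const_mul_atTop ha
      refine this.congr fun n => ?_
      simp only [Function.comp_apply]
      ring
    exact hx.eventually_ge_atTop _
  have e6 : ∀ᶠ n : ℕ in atTop, (a + 1) * d * (Real.log n / n) ≤ 1 / 2 := by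
    have ht : Tendsto (fun n : ℕ => (a + 1) * d * (Real.log n / n)) atTop (nhds 0) := by
      have := aux_log_div_self.const_mul ((a + 1) * d)
      simpa using this
    exact ht.eventually (eventually_le_nhds (by norm_num))
  -- the main eventual estimate
  have main : ∀ᶠ n : ℕ in atTop, f n ≤ g n ∧ c0 ≤ f n := by
    filter_upwards [e1, e2, e3, e4, e5, e6] with n h1 h2 h3 h4 h5 h6
    have hnpos : (0 : ℝ) < n := lt_of_le_of_lt hd.le h2
    set Lg : ℝ := Real.log n with hLgdef
    have hLgpos : 0 < Lg := lt_of_lt_of_le one_pos h3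
    set M : ℕ := ⌈a * Real.log n / Real.log (Real.log n)⌉₊ with hMdef
    have hkM : k ≤ M := by
      have := Nat.ceil_mono h5
      rwa [Nat.ceil_natCast] at this
    have hM1 : 1 ≤ M := le_trans hk1 hkM
    have hM1' : (1 : ℝ) ≤ (M : ℝ) := by exact_mod_cast hM1
    set p : ℝ := d / n with hpdef
    have hp0 : 0 < p := div_pos hd hnpos
    have hp1 : p < 1 := (div_lt_one hnpos).mpr h2
    set q : ℝ := (M : ℝ) * p with hqdef
    have hq0 : 0 ≤ q := mul_nonneg (Nat.cast_nonneg M) hp0.le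
    have hqpos : 0 < q := mul_pos (lt_of_lt_of_le one_pos hM1') hp0
    -- M ≤ (a+1) * Lg
    have hMle : (M : ℝ) ≤ (a + 1) * Lg := by
      have hx0 : 0 ≤ a * Real.log n / Real.log (Real.log n) :=
        div_nonneg (mul_nonneg ha.le (le_trans one_pos.le h3)) (le_trans one_pos.le h4)
      have h7 : (M : ℝ) ≤ a * Real.log n / Real.log (Real.log n) + 1 :=
        (Nat.ceil_lt_add_one hx0).le
      have h8 : a * Real.log n / Real.log (Real.log n) ≤ a * Lg :=
        div_le_self (mul_nonneg ha.le (le_trans one_pos.le h3)) h4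
      nlinarith
    -- q ≤ 1/2
    have hq2 : q ≤ 1 / 2 := by
      have : q ≤ (a + 1) * Lg * p :=
        mul_le_mul_of_nonneg_right hMle hp0.le
      have heq : (a + 1) * Lg * p = (a + 1) * d * (Lg / n) := by
        rw [hpdef]; ring
      calc q ≤ (a + 1) * Lg * p := this
        _ = (a + 1) * d * (Lg / n) := heq
        _ ≤ 1 / 2 := h6
    have hq1 : q < 1 := lt_of_le_of_lt hq2 (by norm_num)
    -- pmf values
    have hpmf : ∀ j : ℕ, (μ {ω | B n ω = j}).toReal =
        (Nat.choose M j : ℝ) * p ^ j * (1 - p) ^ (M - j) := hB n h1 h2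
    -- upper bound for the tail probability
    have hterm : ∀ j : ℕ, (Nat.choose M j : ℝ) * p ^ j * (1 - p) ^ (M - j) ≤ q ^ j := by
      intro j
      have h1' : (Nat.choose M j : ℝ) ≤ (M : ℝ) ^ j := by
        exact_mod_cast Nat.choose_le_pow M j
      have h2' : (1 - p) ^ (M - j) ≤ 1 :=
        pow_le_one₀ (by linarith) (by linarith)
      calc (Nat.choose M j : ℝ) * p ^ j * (1 - p) ^ (M - j)
          ≤ (M : ℝ) ^ j * p ^ j * 1 :=
            mul_le_mul (mul_le_mul h1' le_rfl (pow_nonneg hp0.le j)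
              (pow_nonneg (Nat.cast_nonneg M) j)) h2'
              (pow_nonneg (by linarith) _) (by positivity)
        _ = q ^ j := by rw [mul_one, hqdef, mul_pow]
    have hsum : Summable (fun j : ℕ => q ^ (k + j)) := by
      have h := (summable_geometric_of_lt_one hq0 hq1).mul_left (q ^ k)
      simpa [pow_add] using h
    have htsum : ∑' j : ℕ, q ^ (k + j) = q ^ k * (1 - q)⁻¹ := by
      simp only [pow_add]
      rw [tsum_mul_left, tsum_geometric_of_lt_one hq0 hq1]
    have hinv : (1 - q)⁻¹ ≤ 2 := by
      have h21 : (2 : ℝ)⁻¹ ≤ 1 - q := by linarith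
      calc (1 - q)⁻¹ ≤ ((2 : ℝ)⁻¹)⁻¹ := by gcongr
        _ = 2 := by norm_num
    have hSsub : {ω | δ ≤ (B n ω : ℝ)} ⊆ ⋃ j : ℕ, {ω | B n ω = k + j} := by
      intro ω hω
      have hBk : k ≤ B n ω := by
        rw [hkdef]
        exact Nat.ceil_le.mpr hω
      exact Set.mem_iUnion.mpr ⟨B n ω - k, by simp [Nat.add_sub_cancel' hBk]⟩
    have hμS : μ {ω | δ ≤ (B n ω : ℝ)} ≤ ENNReal.ofReal (2 * q ^ k) := by
      calc μ {ω | δ ≤ (B n ω : ℝ)}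
          ≤ μ (⋃ j : ℕ, {ω | B n ω = k + j}) := measure_mono hSsub
        _ ≤ ∑' j : ℕ, μ {ω | B n ω = k + j} := measure_iUnion_le _
        _ = ∑' j : ℕ, ENNReal.ofReal
              ((Nat.choose M (k + j) : ℝ) * p ^ (k + j) * (1 - p) ^ (M - (k + j))) := by
            refine tsum_congr fun j => ?_
            rw [← hpmf (k + j), ENNReal.ofReal_toReal (measure_ne_top μ _)]
        _ ≤ ∑' j : ℕ, ENNReal.ofReal (q ^ (k + j)) :=
            ENNReal.tsum_le_tsum fun j => ENNReal.ofReal_le_ofReal (hterm (k + j))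
        _ = ENNReal.ofReal (∑' j : ℕ, q ^ (k + j)) :=
            (ENNReal.ofReal_tsum_of_nonneg (fun j => pow_nonneg hq0 _) hsum).symm
        _ ≤ ENNReal.ofReal (2 * q ^ k) := by
            refine ENNReal.ofReal_le_ofReal ?_
            rw [htsum]
            calc q ^ k * (1 - q)⁻¹ ≤ q ^ k * 2 :=
                mul_le_mul_of_nonneg_left hinv (pow_nonneg hq0 k)
              _ = 2 * q ^ k := by ring
    have hPub : (μ {ω | δ ≤ (B n ω : ℝ)}).toReal ≤ 2 * q ^ k :=
      ENNReal.toReal_le_of_le_ofReal (by positivity) hμS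
    -- lower bound
    have hsub2 : {ω | B n ω = k} ⊆ {ω | δ ≤ (B n ω : ℝ)} := by
      intro ω hω
      simp only [Set.mem_setOf_eq] at hω ⊢
      rw [hω]
      exact hδk
    have hPlb : p ^ k * (1 / 2) ≤ (μ {ω | δ ≤ (B n ω : ℝ)}).toReal := by
      have hmono : (μ {ω | B n ω = k}).toReal ≤ (μ {ω | δ ≤ (B n ω : ℝ)}).toReal :=
        ENNReal.toReal_mono (measure_ne_top μ _) (measure_mono hsub2)
      have hC1 : (1 : ℝ) ≤ (Nat.choose M k : ℝ) := by
        exact_mod_cast Nat.succ_le_of_lt (Nat.choose_pos hkM)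
      have hbern : 1 - (M : ℝ) * p ≤ (1 - p) ^ M := by
        have := one_add_mul_le_pow (a := -p) (by linarith) M
        calc 1 - (M : ℝ) * p = 1 + (M : ℝ) * (-p) := by ring
          _ ≤ (1 + -p) ^ M := this
          _ = (1 - p) ^ M := by ring_nf
      have hpow : (1 - p) ^ M ≤ (1 - p) ^ (M - k) :=
        pow_le_pow_of_le_one (by linarith) (by linarith) (Nat.sub_le M k)
      have hhalf : (1 / 2 : ℝ) ≤ (1 - p) ^ (M - k) := by
        have : (1 / 2 : ℝ) ≤ 1 - (M : ℝ) * p := by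
          have : (M : ℝ) * p = q := rfl
          linarith [hq2]
        linarith
      calc p ^ k * (1 / 2) ≤ p ^ k * (1 - p) ^ (M - k) := by
            exact mul_le_mul_of_nonneg_left hhalf (pow_nonneg hp0.le k)
        _ ≤ (Nat.choose M k : ℝ) * p ^ k * (1 - p) ^ (M - k) := by
            have hnn : (0 : ℝ) ≤ p ^ k * (1 - p) ^ (M - k) :=
              mul_nonneg (pow_nonneg hp0.le k) (pow_nonneg (by linarith) _)
            nlinarith
        _ = (μ {ω | B n ω = k}).toReal := (hpmf k).symm
        _ ≤ (μ {ω | δ ≤ (B n ω : ℝ)}).toReal := hmono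
    have hPpos : 0 < (μ {ω | δ ≤ (B n ω : ℝ)}).toReal :=
      lt_of_lt_of_le (by positivity) hPlb
    set P : ℝ := (μ {ω | δ ≤ (B n ω : ℝ)}).toReal with hPdef
    -- upper bound on f n
    constructor
    · -- f n ≤ g n
      have hMd : (0 : ℝ) < (M : ℝ) * d := mul_pos (lt_of_lt_of_le one_pos hM1') hd
      have hlogP : Real.log P ≤ Real.log 2 + (k : ℝ) * (Real.log ((M : ℝ) * d) - Lg) := by
        have h2q : Real.log P ≤ Real.log (2 * q ^ k) :=
          Real.log_le_log hPpos hPub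
        have : Real.log (2 * q ^ k) = Real.log 2 + (k : ℝ) * Real.log q := by
          rw [Real.log_mul (by norm_num) (by positivity), Real.log_pow]
        rw [this] at h2q
        have hqe : q = (M : ℝ) * d / n := by rw [hqdef, hpdef]; ring
        have : Real.log q = Real.log ((M : ℝ) * d) - Lg := by
          rw [hqe, Real.log_div hMd.ne' hnpos.ne']
        rw [this] at h2q
        exact h2q
      have hlogMd : Real.log ((M : ℝ) * d) ≤ Real.log ((a + 1) * d) + Real.log Lg := by
        have h9 : (M : ℝ) * d ≤ (a + 1) * d * Lg := by nlinarith
        calc Real.log ((M : ℝ) * d) ≤ Real.log ((a + 1) * d * Lg) :=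
              Real.log_le_log hMd h9
          _ = Real.log ((a + 1) * d) + Real.log Lg :=
              Real.log_mul (by positivity) hLgpos.ne'
      have hlogP2 : Real.log P ≤
          Real.log 2 + (k : ℝ) * (Real.log ((a + 1) * d) + Real.log Lg) - (k : ℝ) * Lg := by
        have : (k : ℝ) * Real.log ((M : ℝ) * d) ≤
            (k : ℝ) * (Real.log ((a + 1) * d) + Real.log Lg) :=
          mul_le_mul_of_nonneg_left hlogMd (Nat.cast_nonneg k)
        nlinarith
      have hfg' : f n ≤ (Real.log 2 + (k : ℝ) * (Real.log ((a + 1) * d) + Real.log Lg)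
          - (k : ℝ) * Lg) / Lg :=
        (div_le_div_iff_of_pos_right hLgpos).mpr hlogP2
      have hgeq : (Real.log 2 + (k : ℝ) * (Real.log ((a + 1) * d) + Real.log Lg)
          - (k : ℝ) * Lg) / Lg = g n := by
        rw [hgdef]
        simp only [← hLgdef]
        field_simp
        ring
      calc f n ≤ _ := hfg'
        _ = g n := hgeq
    · -- c0 ≤ f n
      have hlogPlb : (k : ℝ) * Real.log d - Real.log 2 - (k : ℝ) * Lg ≤ Real.log P := by
        have h10 : Real.log (p ^ k * (1 / 2)) ≤ Real.log P :=
          Real.log_le_log (by positivity) hPlb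
        have : Real.log (p ^ k * (1 / 2)) =
            (k : ℝ) * Real.log d - Real.log 2 - (k : ℝ) * Lg := by
          rw [Real.log_mul (by positivity) (by norm_num), Real.log_pow, hpdef,
            Real.log_div hd.ne' hnpos.ne']
          have : Real.log (1 / 2 : ℝ) = -Real.log 2 := by
            rw [one_div, Real.log_inv]
          rw [this]
          ring
        linarith [this ▸ h10]
      set c1 : ℝ := (k : ℝ) * Real.log d - Real.log 2 with hc1def
      have hfl : (c1 - (k : ℝ) * Lg) / Lg ≤ f n :=
        (div_le_div_iff_of_pos_right hLgpos).mpr hlogPlb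
      have heq2 : (c1 - (k : ℝ) * Lg) / Lg = c1 / Lg - (k : ℝ) := by
        field_simp
      have habs : -|c1| ≤ c1 / Lg := by
        have h11 : |c1 / Lg| ≤ |c1| := by
          rw [abs_div, abs_of_pos hLgpos]
          exact div_le_self (abs_nonneg c1) h3
        linarith [neg_abs_le (c1 / Lg)]
      rw [hc0def]
      calc -|c1| - (k : ℝ) ≤ c1 / Lg - (k : ℝ) := by linarith
        _ = (c1 - (k : ℝ) * Lg) / Lg := heq2.symm
        _ ≤ f n := hfl
  have hfg : f ≤ᶠ[atTop] g := main.mono fun n h => h.1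
  have hflb : ∀ᶠ n in atTop, c0 ≤ f n := main.mono fun n h => h.2
  have hcob : IsCoboundedUnder (· ≤ ·) atTop f :=
    IsCoboundedUnder.of_frequently_ge hflb.frequently
  have hbdd : IsBoundedUnder (· ≤ ·) atTop g := hgt.isBoundedUnder_le
  calc limsup f atTop ≤ limsup g atTop := limsup_le_limsup hfg hcob hbdd
    _ = -(k : ℝ) := hgt.limsup_eq
    _ ≤ -δ := neg_le_neg hδk
end
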